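/- In the g₀-module V of the previous statement (H v_n = -2n v_n, E v_{-n} = (n+1/2)v_{-n-1} and F v_n = (n+1/2)v_{n+1} for n ≥ 0, E v_n = 0 and F v_{-n} = 0 for n > 0), the subspace W = span{v_n : n ≠ 0} is a submodule, the quotient V/W is one-dimensional with E, F, H all acting by zero, and W is the unique maximal proper submodule of V (i.e., every proper submodule is contained in W). -/
import Mathlib


/-- Operator on the free ℂ-module on basis `(v_n)_{n ∈ ℤ}` (encoded as `ℤ →₀ ℂ`)
sending `v_p` to `a p • v_(p+s)`. -/
noncomputable def sop (a : ℤ → ℂ) (s : ℤ) : Module.End ℂ (ℤ →₀ ℂ) :=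
  Finsupp.lsum ℂ fun p => a p • Finsupp.lsingle (p + s)

/-- `E v_m = (-m + 1/2) v_(m-1)` for `m ≤ 0`, and `E v_m = 0` for `m > 0`. -/
noncomputable def Eop : Module.End ℂ (ℤ →₀ ℂ) :=
  sop (fun m => if m ≤ 0 then -(m : ℂ) + 1 / 2 else 0) (-1)

/-- `F v_m = (m + 1/2) v_(m+1)` for `m ≥ 0`, and `F v_m = 0` for `m < 0`. -/
noncomputable def Fop : Module.End ℂ (ℤ →₀ ℂ) :=
  sop (fun m => if 0 ≤ m then (m : ℂ) + 1 / 2 else 0) 1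

/-- `H v_m = -2m v_m`. -/
noncomputable def Hop : Module.End ℂ (ℤ →₀ ℂ) := sop (fun m => -2 * (m : ℂ)) 0

/-- `W = span {v_n : n ≠ 0}`. -/
noncomputable def W : Submodule ℂ (ℤ →₀ ℂ) :=
  Submodule.span ℂ {f | ∃ n : ℤ, n ≠ 0 ∧ f = Finsupp.single n (1 : ℂ)}

lemma sop_apply (a : ℤ → ℂ) (s : ℤ) (x : ℤ →₀ ℂ) (k : ℤ) :
    sop a s x k = a (k - s) * x (k - s) := by
  classical
  rw [sop, Finsupp.lsum_apply, Finsupp.sum_apply, Finsupp.sum]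
  have h : ∀ p ∈ x.support, ((a p • Finsupp.lsingle (R := ℂ) (p + s)) (x p)) k
      = if p = k - s then a p * x p else 0 := by
    intro p _
    simp only [LinearMap.smul_apply, Finsupp.lsingle_apply, Finsupp.smul_apply,
      Finsupp.single_apply, smul_eq_mul, mul_ite, mul_zero]
    exact if_congr (by omega) rfl rfl
  rw [Finset.sum_congr rfl h, Finset.sum_ite_eq' x.support (k - s) (fun p => a p * x p)]
  split_ifs with hs
  · rfl
  · rw [Finsupp.notMem_support_iff.mp hs, mul_zero]

lemma mem_W_iff (f : ℤ →₀ ℂ) : f ∈ W ↔ f 0 = 0 := by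
  constructor
  · intro hf
    have hle : W ≤ LinearMap.ker (Finsupp.lapply (M := ℂ) (R := ℂ) (0 : ℤ)) := by
      rw [W, Submodule.span_le]
      rintro g ⟨n, hn, rfl⟩
      simp [Finsupp.single_apply, hn]
    exact hle hf
  · intro hf
    have hrep : f = ∑ n ∈ f.support, Finsupp.single n (f n) :=
      (Finsupp.sum_single f).symm
    rw [hrep]
    apply Submodule.sum_mem
    intro n _hn
    have hn0 : n ≠ 0 := by
      rintro rfl
      exact (Finsupp.mem_support_iff.mp _hn) hf
    have : Finsupp.single n (f n) = (f n) • Finsupp.single n (1 : ℂ) := by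
      rw [Finsupp.smul_single', mul_one]
    rw [this]
    exact Submodule.smul_mem _ _ (Submodule.subset_span ⟨n, hn0, rfl⟩)

lemma Eop_mem_W (x : ℤ →₀ ℂ) : Eop x ∈ W := by
  rw [mem_W_iff, Eop, sop_apply]; norm_num

lemma Fop_mem_W (x : ℤ →₀ ℂ) : Fop x ∈ W := by
  rw [mem_W_iff, Fop, sop_apply]; norm_num

lemma Hop_mem_W (x : ℤ →₀ ℂ) : Hop x ∈ W := by
  rw [mem_W_iff, Hop, sop_apply]; norm_num

lemma finrank_quot : Module.finrank ℂ ((ℤ →₀ ℂ) ⧸ W) = 1 := by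
  have hW : W = LinearMap.ker (Finsupp.lapply (M := ℂ) (R := ℂ) (0 : ℤ)) := by
    ext f
    rw [mem_W_iff, LinearMap.mem_ker]
    rfl
  have hsurj : Function.Surjective (Finsupp.lapply (M := ℂ) (R := ℂ) (0 : ℤ)) := by
    intro c
    exact ⟨Finsupp.single 0 c, by simp⟩
  have e : ((ℤ →₀ ℂ) ⧸ W) ≃ₗ[ℂ] ℂ :=
    (Submodule.quotEquivOfEq _ _ hW).trans
      ((Finsupp.lapply (M := ℂ) (R := ℂ) (0 : ℤ)).quotKerEquivOfSurjective hsurj)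
  rw [e.finrank_eq, Module.finrank_self]

/-- weight-component projection via Hop-invariance -/
lemma component_mem (p : Submodule ℂ (ℤ →₀ ℂ)) (hH : ∀ x ∈ p, Hop x ∈ p) :
    ∀ x ∈ p, ∀ n : ℤ, Finsupp.single n (x n) ∈ p := by
  classical
  suffices H : ∀ k : ℕ, ∀ x ∈ p, ∀ n : ℤ, (x.support.erase n).card ≤ k →
      Finsupp.single n (x n) ∈ p by
    intro x hx n; exact H _ x hx n le_rfl
  intro k
  induction k with
  | zero =>
    intro x hx n hcard
    have he : x.support.erase n = ∅ := Finset.card_eq_zero.mp (Nat.le_zero.mp hcard)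
    have hsub : x.support ⊆ {n} := by
      intro a ha
      by_contra hne
      exact Finset.notMem_empty a (he ▸ Finset.mem_erase.mpr ⟨by simpa using hne, ha⟩)
    have : x = Finsupp.single n (x n) := Finsupp.support_subset_singleton.mp hsub
    exact this ▸ hx
  | succ k ih =>
    intro x hx n hcard
    rcases Finset.eq_empty_or_nonempty (x.support.erase n) with he | ⟨m, hm⟩
    · have hsub : x.support ⊆ {n} := by
        intro a ha
        by_contra hne
        exact Finset.notMem_empty a (he ▸ Finset.mem_erase.mpr ⟨by simpa using hne, ha⟩)
      have : x = Finsupp.single n (x n) := Finsupp.support_subset_singleton.mp hsub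
      exact this ▸ hx
    · have hmn : m ≠ n := (Finset.mem_erase.mp hm).1
      set y : ℤ →₀ ℂ := Hop x + (2 * (m : ℂ)) • x with hy
      have hyp : y ∈ p := Submodule.add_mem _ (hH x hx) (Submodule.smul_mem _ _ hx)
      have hyk : ∀ j : ℤ, y j = (2 * m - 2 * j) * x j := by
        intro j
        simp only [hy, Finsupp.add_apply, Finsupp.smul_apply, Hop, sop_apply,
          smul_eq_mul, sub_zero]
        ring
      have hsupy : y.support.erase n ⊆ (x.support.erase n).erase m := by
        intro a ha
        rcases Finset.mem_erase.mp ha with ⟨han, has⟩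
        have hax : a ∈ x.support := by
          rw [Finsupp.mem_support_iff] at has ⊢
          intro h; exact has (by rw [hyk a, h, mul_zero])
        have ham : a ≠ m := by
          rintro rfl
          have : y a = 0 := by rw [hyk a]; ring
          exact (Finsupp.mem_support_iff.mp has) this
        exact Finset.mem_erase.mpr ⟨ham, Finset.mem_erase.mpr ⟨han, hax⟩⟩
      have hlt : (y.support.erase n).card ≤ k := by
        have h1 := Finset.card_le_card hsupy
        have h2 := Finset.card_erase_lt_of_mem hm
        omega
      have hyn : Finsupp.single n (y n) ∈ p := ih y hyp n hlt
      have hc : (2 * (m : ℂ) - 2 * n) ≠ 0 := by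
        intro h
        have : (m : ℂ) = (n : ℂ) := by linear_combination h / 2
        exact hmn (by exact_mod_cast this)
      have heq : Finsupp.single n (x n)
          = (2 * (m : ℂ) - 2 * n)⁻¹ • Finsupp.single n (y n) := by
        rw [hyk n, Finsupp.smul_single', inv_mul_cancel_left₀ hc]
      rw [heq]
      exact Submodule.smul_mem _ _ hyn

lemma half_ne_zero (n : ℤ) (hn : 0 ≤ n) : ((n : ℂ) + 1 / 2) ≠ 0 := by
  intro h
  have : ((2 * n + 1 : ℤ) : ℂ) = 0 := by push_cast; linear_combination 2 * h
  have := Int.cast_injective (α := ℂ) (this.trans (Int.cast_zero).symm)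
  omega

lemma sop_single (a : ℤ → ℂ) (s n : ℤ) (c : ℂ) :
    sop a s (Finsupp.single n c) = Finsupp.single (n + s) (a n * c) := by
  rw [sop, Finsupp.lsum_single, LinearMap.smul_apply, Finsupp.lsingle_apply,
    Finsupp.smul_single']

lemma single_one_mem (p : Submodule ℂ (ℤ →₀ ℂ)) {n : ℤ} {c : ℂ} (hc : c ≠ 0)
    (h : Finsupp.single n (c * 1) ∈ p) : Finsupp.single n (1 : ℂ) ∈ p := by
  have := Submodule.smul_mem p c⁻¹ h
  rwa [Finsupp.smul_single', inv_mul_cancel_left₀ hc] at this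

lemma maximal (p : Submodule ℂ (ℤ →₀ ℂ))
    (hE : ∀ x ∈ p, Eop x ∈ p) (hF : ∀ x ∈ p, Fop x ∈ p) (hH : ∀ x ∈ p, Hop x ∈ p)
    (hne : p ≠ ⊤) : p ≤ W := by
  by_contra hle
  apply hne
  obtain ⟨x, hxp, hxW⟩ := SetLike.not_le_iff_exists.mp hle
  rw [mem_W_iff] at hxW
  have h0 : Finsupp.single (0 : ℤ) (1 : ℂ) ∈ p := by
    have h := component_mem p hH x hxp 0
    rw [show x 0 = x 0 * 1 from (mul_one _).symm] at h
    exact single_one_mem p hxW h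
  have hpos : ∀ k : ℕ, Finsupp.single (k : ℤ) (1 : ℂ) ∈ p := by
    intro k
    induction k with
    | zero => exact_mod_cast h0
    | succ k ihk =>
      have hFk := hF _ ihk
      rw [Fop, sop_single, if_pos (by exact_mod_cast Nat.zero_le k)] at hFk
      have hh := single_one_mem p (half_ne_zero (k : ℤ) (Int.ofNat_nonneg k)) hFk
      rw [show ((k + 1 : ℕ) : ℤ) = (k : ℤ) + 1 from by push_cast; ring]
      exact hh
  have hneg : ∀ k : ℕ, Finsupp.single (-(k : ℤ)) (1 : ℂ) ∈ p := by
    intro k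
    induction k with
    | zero => simpa using h0
    | succ k ihk =>
      have hEk := hE _ ihk
      rw [Eop, sop_single, if_pos (by omega : -(k : ℤ) ≤ 0)] at hEk
      have hc : -((-(k : ℤ) : ℤ) : ℂ) + 1 / 2 ≠ 0 := by
        have := half_ne_zero (k : ℤ) (Int.ofNat_nonneg k)
        push_cast at this ⊢
        simpa using this
      have hh := single_one_mem p hc hEk
      rw [show -((k + 1 : ℕ) : ℤ) = -(k : ℤ) + -1 from by push_cast; ring]
      exact hh
  have hall : ∀ n : ℤ, Finsupp.single n (1 : ℂ) ∈ p := by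
    intro n
    rcases le_or_gt 0 n with h | h
    · have := hpos n.toNat; rwa [Int.toNat_of_nonneg h] at this
    · have := hneg (-n).toNat
      rwa [Int.toNat_of_nonneg (by omega), neg_neg] at this
  rw [Submodule.eq_top_iff']
  intro f
  rw [show f = ∑ n ∈ f.support, Finsupp.single n (f n) from (Finsupp.sum_single f).symm]
  apply Submodule.sum_mem
  intro n _
  rw [show Finsupp.single n (f n) = (f n) • Finsupp.single n (1 : ℂ) by
    rw [Finsupp.smul_single', mul_one]]
  exact Submodule.smul_mem _ _ (hall n)

theorem contracted_principal_series_maximal_submodule :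
    (∀ x ∈ W, Eop x ∈ W) ∧
    (∀ x ∈ W, Fop x ∈ W) ∧
    (∀ x ∈ W, Hop x ∈ W) ∧
    Module.finrank ℂ ((ℤ →₀ ℂ) ⧸ W) = 1 ∧
    (∀ x : ℤ →₀ ℂ, Eop x ∈ W) ∧
    (∀ x : ℤ →₀ ℂ, Fop x ∈ W) ∧
    (∀ x : ℤ →₀ ℂ, Hop x ∈ W) ∧
    (∀ p : Submodule ℂ (ℤ →₀ ℂ),
      (∀ x ∈ p, Eop x ∈ p) → (∀ x ∈ p, Fop x ∈ p) → (∀ x ∈ p, Hop x ∈ p) →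
      p ≠ ⊤ → p ≤ W) := by

  exact ⟨fun x _ => Eop_mem_W x, fun x _ => Fop_mem_W x, fun x _ => Hop_mem_W x,
    finrank_quot, Eop_mem_W, Fop_mem_W, Hop_mem_W, maximal⟩
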